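/- Let t ≠ 0 be complex, r a positive natural number, and define ε⁺_{r,s}(t,q) = ∏_{n=1}^{r} ((s-rt)/(2t) + q/t - 1/2 + n). If ε⁺_{r,s}(t,q) = 0, then there exists a half-odd-integer k = m - 1/2 with m ∈ {1, ..., r} (so 1/2 ≤ k ≤ r - 1/2) such that h_{r,s}(t,q) = h⁺_k(t,q), where h_{r,s}(t,q) = (s-rt)²/(8t) - q²/(2t) - t/8 and h⁺_k(t,q) = kq + (t/2)(k²-1/4). -/

import Mathlib

theorem stmt_11 (t : ℂ) (ht : t ≠ 0) (r : ℕ) (hr : 1 ≤ r) (s q : ℂ)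
    (hε : ∏ n ∈ Finset.Icc 1 r,
        ((s - (r : ℂ)*t)/(2*t) + q/t - 1/2 + (n : ℂ)) = 0) :
    ∃ m ∈ Finset.Icc 1 r,
      (s - (r : ℂ)*t)^2 / (8*t) - q^2 / (2*t) - t/8
        = ((m : ℂ) - 1/2) * q + (t/2) * (((m : ℂ) - 1/2)^2 - 1/4) := by
  rw [Finset.prod_eq_zero_iff] at hε
  obtain ⟨m, hm, hzero⟩ := hε
  refine ⟨m, hm, ?_⟩
  field_simp at hzero
  have hA : s - (r : ℂ) * t = t - 2*q - 2*(m:ℂ)*t := by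
    apply mul_left_cancel₀ (show (2:ℂ)*t ≠ 0 by simp [ht])
    linear_combination (2*t) * hzero
  rw [hA]
  field_simp
  ring
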